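/- Let f : [0,1] → [0,1] be continuous and let I_1, I_2, ..., I_k be closed subintervals of [0,1] such that f(I_j) ⊇ I_{j+1} for j = 1,...,k-1 and f(I_k) ⊇ I_1. Then there exists a point x ∈ I_1 with f^k(x) = x and f^j(x) ∈ I_{j+1} for j = 0, 1, ..., k-1. -/

import Mathlib

open Set
open Fin.NatCast

/-- If `g` is continuous on `[u,v]`, `g u = c ≤ d = g v`, then some subinterval of
`[u,v]` is mapped *onto* `[c,d]`. -/
lemma key_mono {g : ℝ → ℝ} {u v c d : ℝ} (huv : u ≤ v)
    (hg : ContinuousOn g (Icc u v)) (hcd : c ≤ d)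
    (hu : g u = c) (hv : g v = d) :
    ∃ p q, p ≤ q ∧ Icc p q ⊆ Icc u v ∧ g '' Icc p q = Icc c d := by
  set T : Set ℝ := Icc u v ∩ g ⁻¹' {c} with hT
  have hTclosed : IsClosed T :=
    hg.preimage_isClosed_of_isClosed isClosed_Icc isClosed_singleton
  have hTne : T.Nonempty := ⟨u, ⟨le_rfl, huv⟩, by simpa using hu⟩
  have hTbdd : BddAbove T := ⟨v, fun x hx => hx.1.2⟩
  set s := sSup T with hs_def
  have hsT : s ∈ T := hTclosed.csSup_mem hTne hTbdd
  have hs : g s = c := hsT.2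
  have hsuv : s ∈ Icc u v := hsT.1
  set S : Set ℝ := Icc s v ∩ g ⁻¹' {d} with hS
  have hSclosed : IsClosed S :=
    ((hg.mono (Icc_subset_Icc hsuv.1 le_rfl)).preimage_isClosed_of_isClosed
      isClosed_Icc isClosed_singleton)
  have hSne : S.Nonempty := ⟨v, ⟨hsuv.2, le_rfl⟩, by simpa using hv⟩
  have hSbdd : BddBelow S := ⟨s, fun x hx => hx.1.1⟩
  set t := sInf S with ht_def
  have htS : t ∈ S := hSclosed.csInf_mem hSne hSbdd
  have ht : g t = d := htS.2
  have hst : s ≤ t := htS.1.1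
  have htv : t ≤ v := htS.1.2
  have hsub : Icc s t ⊆ Icc u v := Icc_subset_Icc hsuv.1 htv
  refine ⟨s, t, hst, hsub, ?_⟩
  apply Subset.antisymm
  · rintro y ⟨x, hx, rfl⟩
    constructor
    · by_contra h
      push_neg at h
      have hmem : c ∈ Icc (g x) (g t) := ⟨h.le, ht ▸ hcd⟩
      have hcont : ContinuousOn g (Icc x t) :=
        hg.mono (Icc_subset_Icc (hsuv.1.trans hx.1) htv)
      obtain ⟨y, hy, hyc⟩ := intermediate_value_Icc hx.2 hcont hmem
      have hyT : y ∈ T := ⟨⟨hsuv.1.trans (hx.1.trans hy.1), hy.2.trans htv⟩, hyc⟩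
      have : x = s := le_antisymm ((hy.1.trans (le_csSup hTbdd hyT)) : x ≤ s) hx.1
      rw [this, hs] at h
      exact lt_irrefl c h
    · by_contra h
      push_neg at h
      have hmem : d ∈ Icc (g s) (g x) := ⟨hs ▸ hcd, h.le⟩
      have hcont : ContinuousOn g (Icc s x) :=
        hg.mono (Icc_subset_Icc hsuv.1 (hx.2.trans htv))
      obtain ⟨y, hy, hyd⟩ := intermediate_value_Icc hx.1 hcont hmem
      have hyS : y ∈ S := ⟨⟨hy.1, (hy.2.trans hx.2).trans htv⟩, hyd⟩
      have : x = t := le_antisymm hx.2 ((csInf_le hSbdd hyS).trans hy.2)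
      rw [this, ht] at h
      exact lt_irrefl d h
  · have := intermediate_value_Icc hst (hg.mono hsub)
    rw [hs, ht] at this
    exact this

/-- If `g` is continuous on `[p,q]` and `g '' [p,q] ⊇ [c,d]` with `c ≤ d`, then some
subinterval of `[p,q]` is mapped *onto* `[c,d]`. -/
lemma key {g : ℝ → ℝ} {p q c d : ℝ}
    (hg : ContinuousOn g (Icc p q)) (hcd : c ≤ d)
    (hcov : Icc c d ⊆ g '' Icc p q) :
    ∃ p' q', p' ≤ q' ∧ Icc p' q' ⊆ Icc p q ∧ g '' Icc p' q' = Icc c d := by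
  obtain ⟨u, hu, huc⟩ := hcov (left_mem_Icc.mpr hcd)
  obtain ⟨v, hv, hvd⟩ := hcov (right_mem_Icc.mpr hcd)
  rcases le_total u v with huv | hvu
  · obtain ⟨p', q', h1, h2, h3⟩ :=
      key_mono huv (hg.mono (Icc_subset_Icc hu.1 hv.2)) hcd huc hvd
    exact ⟨p', q', h1, h2.trans (Icc_subset_Icc hu.1 hv.2), h3⟩
  · -- reflect : x ↦ u + v - x maps [v,u] to [v,u]
    set r : ℝ → ℝ := fun x => u + v - x with hr
    have hrmaps : MapsTo r (Icc v u) (Icc v u) := by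
      intro x hx
      constructor <;> simp only [hr] <;> linarith [hx.1, hx.2]
    have hrefl : Icc v u ⊆ Icc p q := Icc_subset_Icc hv.1 hu.2
    have hgr : ContinuousOn (g ∘ r) (Icc v u) :=
      (hg.mono hrefl).comp ((continuous_const.sub continuous_id).continuousOn) hrmaps
    have h1 : (g ∘ r) v = c := by simp [hr, Function.comp, huc]
    have h2 : (g ∘ r) u = d := by
      simp only [hr, Function.comp]
      rw [show u + v - u = v by ring, hvd]
    obtain ⟨p', q', hpq', hsub', heq'⟩ := key_mono hvu hgr hcd h1 h2
    refine ⟨u + v - q', u + v - p', by linarith, ?_, ?_⟩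
    · intro x hx
      have h1' : v ≤ p' := (hsub' (left_mem_Icc.mpr hpq')).1
      have h2' : q' ≤ u := (hsub' (right_mem_Icc.mpr hpq')).2
      have : x ∈ Icc v u := ⟨by linarith [hx.1], by linarith [hx.2]⟩
      exact hrefl this
    · have himg : r '' Icc p' q' = Icc (u + v - q') (u + v - p') := by
        simp [hr]
      rw [← himg, ← image_comp]
      exact heq'

/-- Given a loop of `k` (here `k = n+1 ≥ 1`) closed subintervals of
`[0,1]` each of which `f`-covers the next (cyclically), there is a point of the
first interval whose orbit follows the loop and which is fixed by `f^[k]`. -/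
theorem loop_of_intervals_periodic_point
    (f : ℝ → ℝ) (hf : ContinuousOn f (Set.Icc 0 1))
    (hmaps : Set.MapsTo f (Set.Icc 0 1) (Set.Icc 0 1))
    (n : ℕ) (a b : Fin (n + 1) → ℝ)
    (hab : ∀ j, a j ≤ b j)
    (hsub : ∀ j, Set.Icc (a j) (b j) ⊆ Set.Icc 0 1)
    (hcover : ∀ j : Fin (n + 1), Set.Icc (a (j + 1)) (b (j + 1)) ⊆ f '' Set.Icc (a j) (b j)) :
    ∃ x ∈ Set.Icc (a 0) (b 0), f^[n + 1] x = x ∧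
      ∀ j : Fin (n + 1), f^[(j : ℕ)] x ∈ Set.Icc (a j) (b j) := by
  -- continuity of iterates on [0,1]
  have hiterC : ∀ m : ℕ, ContinuousOn (f^[m]) (Icc (0:ℝ) 1) := by
    intro m
    induction m with
    | zero => simpa using continuousOn_id
    | succ m ih =>
      rw [Function.iterate_succ]
      exact ih.comp hf hmaps
  -- main induction: nested intervals following the itinerary
  have main : ∀ m : ℕ, ∃ α β : ℝ, α ≤ β ∧ Icc α β ⊆ Icc (a 0) (b 0) ∧
      (∀ j : ℕ, j ≤ m →
        f^[j] '' Icc α β ⊆ Icc (a ((j : Fin (n+1)))) (b ((j : Fin (n+1))))) ∧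
      f^[m] '' Icc α β = Icc (a ((m : Fin (n+1)))) (b ((m : Fin (n+1)))) := by
    intro m
    induction m with
    | zero =>
      refine ⟨a 0, b 0, hab 0, subset_rfl, ?_, ?_⟩
      · intro j hj
        interval_cases j
        simp
      · simp
    | succ m ih =>
      obtain ⟨α, β, hαβ, hsub0, hall, heq⟩ := ih
      have hQ01 : Icc α β ⊆ Icc (0:ℝ) 1 := hsub0.trans (hsub 0)
      have hcover' :
          Icc (a (((m+1 : ℕ) : Fin (n+1)))) (b (((m+1 : ℕ) : Fin (n+1)))) ⊆
            f^[m+1] '' Icc α β := by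
        rw [Function.iterate_succ', image_comp, heq]
        have := hcover ((m : ℕ) : Fin (n+1))
        have hcast : ((m+1 : ℕ) : Fin (n+1)) = ((m : ℕ) : Fin (n+1)) + 1 := by
          push_cast
          ring
        rw [hcast]
        exact this
      obtain ⟨α', β', h1, h2, h3⟩ :=
        key ((hiterC (m+1)).mono hQ01) (hab _) hcover'
      refine ⟨α', β', h1, h2.trans hsub0, ?_, h3⟩
      intro j hj
      rcases Nat.lt_or_ge j (m+1) with h | h
      · exact (image_mono h2).trans (hall j (Nat.lt_succ_iff.mp h))
      · have hje : j = m + 1 := le_antisymm hj h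
        subst hje
        exact h3.subset
  obtain ⟨α, β, hαβ, hsub0, hall, heq⟩ := main (n+1)
  have hcast0 : (((n+1 : ℕ)) : Fin (n+1)) = 0 := by
    simp
  rw [hcast0] at heq
  -- fixed point of f^[n+1] in Icc α β
  have hQ01 : Icc α β ⊆ Icc (0:ℝ) 1 := hsub0.trans (hsub 0)
  obtain ⟨u, hu, huc⟩ : a 0 ∈ f^[n+1] '' Icc α β := by
    rw [heq]; exact left_mem_Icc.mpr (hab 0)
  obtain ⟨v, hv, hvd⟩ : b 0 ∈ f^[n+1] '' Icc α β := by
    rw [heq]; exact right_mem_Icc.mpr (hab 0)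
  set g : ℝ → ℝ := fun x => f^[n+1] x - x with hg_def
  have hgcont : ContinuousOn g (Icc α β) :=
    ((hiterC (n+1)).mono hQ01).sub continuousOn_id
  have huI : uIcc u v ⊆ Icc α β := by
    rw [uIcc]
    exact Icc_subset_Icc (le_inf hu.1 hv.1) (sup_le hu.2 hv.2)
  have hgu : g u ≤ 0 := by
    simp only [hg_def, huc]
    have := (hsub0 hu).1
    linarith
  have hgv : 0 ≤ g v := by
    simp only [hg_def, hvd]
    have := (hsub0 hv).2
    linarith
  have h0 : (0:ℝ) ∈ uIcc (g u) (g v) := by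
    rw [Set.mem_uIcc]
    exact Or.inl ⟨hgu, hgv⟩
  obtain ⟨x, hx, hgx⟩ := intermediate_value_uIcc (hgcont.mono huI) h0
  have hxQ : x ∈ Icc α β := huI hx
  have hfix : f^[n+1] x = x := by
    have : f^[n+1] x - x = 0 := hgx
    linarith
  refine ⟨x, hsub0 hxQ, hfix, ?_⟩
  intro j
  have hj : (j : ℕ) ≤ n + 1 := le_of_lt j.isLt
  have := hall (j : ℕ) hj ⟨x, hxQ, rfl⟩
  simpa [Fin.cast_val_eq_self] using this
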